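/- The lognormal distribution is Stieltjes-indeterminate: letting μ be the probability measure on ℝ with density f(x) = (1/√(2π)) · (1/x) · exp(−(ln x)²/2) for x > 0 and f(x) = 0 for x ≤ 0, all moments of μ are finite and m_k = ∫ x^k dμ = e^{k²/2} for k = 0, 1, 2, …, and there exists a nonnegative measure ν on ℝ supported on [0,∞) with ν ≠ μ whose moment sequence is also {e^{k²/2}} (hence μ is also Hamburger-indeterminate). -/

import Mathlib

open MeasureTheory Filter Topology

/-- The `(n+1) × (n+1)` shifted Hankel matrix `H_{n,p} = (m_{i+j+p})`. -/
noncomputable def hankel (m : ℕ → ℝ) (n p : ℕ) : Matrix (Fin (n + 1)) (Fin (n + 1)) ℝ :=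
  Matrix.of fun i j => m (i.1 + j.1 + p)

/-- The smallest eigenvalue of a real symmetric matrix, as the infimum of the
quadratic form over unit vectors. -/
noncomputable def smallestEig (N : ℕ) (A : Matrix (Fin N) (Fin N) ℝ) : ℝ :=
  sInf {r : ℝ | ∃ v : Fin N → ℝ, (∑ i, v i ^ 2) = 1 ∧ r = ∑ i, ∑ j, v i * A i j * v j}

/-- All moments of `μ` are finite. -/
def HasMoments (μ : Measure ℝ) : Prop :=
  ∀ k : ℕ, Integrable (fun x : ℝ => x ^ k) μ

/-- The `k`-th moment of `μ`. -/
noncomputable def mom (μ : Measure ℝ) (k : ℕ) : ℝ := ∫ x, x ^ k ∂μ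

/-- `μ` is determinate within the Hamburger moment problem. -/
def HamburgerDeterminate (μ : Measure ℝ) : Prop :=
  ∀ ν : Measure ℝ, HasMoments ν → (∀ k, mom ν k = mom μ k) → ν = μ

/-- `μ` is determinate within the Stieltjes moment problem. -/
def StieltjesDeterminate (μ : Measure ℝ) : Prop :=
  ∀ ν : Measure ℝ, ν (Set.Iio 0) = 0 → HasMoments ν → (∀ k, mom ν k = mom μ k) → ν = μ

/-- The density of the standard lognormal distribution. -/
noncomputable def lognormalPdf (x : ℝ) : ℝ :=
  if 0 < x then (Real.sqrt (2 * Real.pi))⁻¹ * x⁻¹ * Real.exp (-(Real.log x) ^ 2 / 2) else 0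

/-- The standard lognormal distribution on `ℝ`. -/
noncomputable def lognormal : Measure ℝ :=
  MeasureTheory.volume.withDensity fun x => ENNReal.ofReal (lognormalPdf x)


open scoped ENNReal NNReal

lemma lognormalPdf_nonneg (x : ℝ) : 0 ≤ lognormalPdf x := by
  unfold lognormalPdf
  split
  · positivity
  · exact le_refl 0 

lemma measurable_lognormalPdf : Measurable lognormalPdf := by
  unfold lognormalPdf
  refine Measurable.ite measurableSet_Ioi ?_ measurable_const
  exact (measurable_const.mul measurable_inv).mul
    (Real.measurable_exp.comp (((Real.measurable_log.pow_const 2).neg).div_const 2))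

lemma gauss_integrable (a : ℝ) : Integrable (fun t : ℝ => Real.exp (-(t - a) ^ 2 / 2)) := by
  have h0 : (fun t : ℝ => Real.exp (-(t - a) ^ 2 / 2))
      = fun t => (fun s : ℝ => Real.exp (-(1/2 : ℝ) * s ^ 2)) (t - a) := by
    funext t; congr 1; ring
  rw [h0]
  exact (integrable_exp_neg_mul_sq (by norm_num)).comp_sub_right a

lemma gauss_integral (a : ℝ) :
    ∫ t : ℝ, Real.exp (-(t - a) ^ 2 / 2) = Real.sqrt (2 * Real.pi) := by
  have h0 : (fun t : ℝ => Real.exp (-(t - a) ^ 2 / 2))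
      = fun t => (fun s : ℝ => Real.exp (-(1/2 : ℝ) * s ^ 2)) (t - a) := by
    funext t; congr 1; ring
  rw [h0, integral_sub_right_eq_self (fun s : ℝ => Real.exp (-(1/2 : ℝ) * s ^ 2)) a,
    integral_gaussian, show Real.pi / (1/2 : ℝ) = 2 * Real.pi by ring]


lemma key_fun (k : ℕ) (t : ℝ) :
    Real.exp t * (lognormalPdf (Real.exp t) * Real.exp t ^ k)
      = (Real.sqrt (2 * Real.pi))⁻¹ *
        (Real.exp ((k : ℝ) ^ 2 / 2) * Real.exp (-(t - (k : ℝ)) ^ 2 / 2)) := by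
  rw [lognormalPdf, if_pos (Real.exp_pos t), Real.log_exp, ← Real.exp_neg,
    show Real.exp t ^ k = Real.exp ((k : ℝ) * t) from (Real.exp_nat_mul t k).symm]
  have h : Real.exp t * Real.exp (-t) * Real.exp (-t ^ 2 / 2) * Real.exp ((k : ℝ) * t)
      = Real.exp ((k : ℝ) ^ 2 / 2) * Real.exp (-(t - (k : ℝ)) ^ 2 / 2) := by
    rw [← Real.exp_add, ← Real.exp_add, ← Real.exp_add, ← Real.exp_add, Real.exp_eq_exp]
    ring
  linear_combination (Real.sqrt (2 * Real.pi))⁻¹ * h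


lemma hzero (k : ℕ) : ∀ x ∉ Set.Ioi (0:ℝ), lognormalPdf x * x ^ k = 0 := by
  intro x hx
  rw [lognormalPdf, if_neg (by simpa using hx), zero_mul]

lemma himg : Real.exp '' Set.univ = Set.Ioi (0:ℝ) := by
  rw [Set.image_univ, Real.range_exp]

lemma hfun (k : ℕ) : (fun t : ℝ => |Real.exp t| • (lognormalPdf (Real.exp t) * Real.exp t ^ k))
    = fun t : ℝ => (Real.sqrt (2 * Real.pi))⁻¹ * Real.exp ((k : ℝ) ^ 2 / 2) *
        Real.exp (-(t - (k : ℝ)) ^ 2 / 2) := by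
  funext t
  rw [abs_of_pos (Real.exp_pos t), smul_eq_mul, key_fun]
  ring

lemma hderiv : ∀ x ∈ (Set.univ : Set ℝ), HasDerivWithinAt Real.exp (Real.exp x) Set.univ x :=
  fun x _ => (Real.hasDerivAt_exp x).hasDerivWithinAt

lemma lognormal_int (k : ℕ) : Integrable (fun x : ℝ => lognormalPdf x * x ^ k) := by
  rw [← integrableOn_iff_integrable_of_support_subset
    (Function.support_subset_iff'.2 (hzero k)), ← himg,
    integrableOn_image_iff_integrableOn_abs_deriv_smul MeasurableSet.univ hderiv
      Real.exp_injective.injOn, IntegrableOn, Measure.restrict_univ, hfun k]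
  exact (gauss_integrable (k : ℝ)).const_mul _

lemma lognormal_intval (k : ℕ) :
    ∫ x : ℝ, lognormalPdf x * x ^ k = Real.exp ((k : ℝ) ^ 2 / 2) := by
  rw [← setIntegral_eq_integral_of_forall_compl_eq_zero (hzero k), ← himg,
    integral_image_eq_integral_abs_deriv_smul MeasurableSet.univ hderiv
      Real.exp_injective.injOn, Measure.restrict_univ, hfun k,
    MeasureTheory.integral_const_mul, gauss_integral]
  have h : Real.sqrt (2 * Real.pi) ≠ 0 := by positivity
  field_simp


lemma lognormal_eq : lognormal
    = MeasureTheory.volume.withDensity fun x => ((lognormalPdf x).toNNReal : ℝ≥0∞) := rfl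

lemma meas_toNNReal : Measurable fun x => (lognormalPdf x).toNNReal :=
  measurable_real_toNNReal.comp measurable_lognormalPdf

lemma smul_eq (k : ℕ) : (fun x : ℝ => (lognormalPdf x).toNNReal • x ^ k)
    = fun x : ℝ => lognormalPdf x * x ^ k := by
  funext x
  rw [NNReal.smul_def, Real.coe_toNNReal _ (lognormalPdf_nonneg x), smul_eq_mul]

lemma lognormal_hasMoment (k : ℕ) : Integrable (fun x : ℝ => x ^ k) lognormal := by
  rw [lognormal_eq, integrable_withDensity_iff_integrable_smul meas_toNNReal, smul_eq]
  exact lognormal_int k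

lemma lognormal_mom (k : ℕ) : mom lognormal k = Real.exp ((k : ℝ) ^ 2 / 2) := by
  rw [mom, lognormal_eq, integral_withDensity_eq_integral_smul meas_toNNReal]
  rw [show (fun x : ℝ => (lognormalPdf x).toNNReal • x ^ k)
    = fun x : ℝ => lognormalPdf x * x ^ k from smul_eq k]
  exact lognormal_intval k

lemma lognormal_prob : IsProbabilityMeasure lognormal := by
  constructor
  have h0 : Integrable lognormalPdf := by
    simpa using lognormal_int 0
  have h1 : ∫ x, lognormalPdf x = 1 := by
    have := lognormal_intval 0
    simpa using this
  rw [lognormal, withDensity_apply _ MeasurableSet.univ, Measure.restrict_univ,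
    ← ofReal_integral_eq_lintegral_ofReal h0 (ae_of_all _ lognormalPdf_nonneg), h1,
    ENNReal.ofReal_one]

lemma lognormal_Iio : lognormal (Set.Iio 0) = 0 := by
  rw [lognormal, withDensity_apply _ measurableSet_Iio]
  rw [setLIntegral_congr_fun measurableSet_Iio
    (fun x (hx : x ∈ Set.Iio (0:ℝ)) => by
      rw [lognormalPdf, if_neg (by simp at hx ⊢; linarith), ENNReal.ofReal_zero])]
  simp

lemma lognormal_one : lognormal {(1:ℝ)} = 0 := by
  rw [lognormal, withDensity_apply _ (measurableSet_singleton 1),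
    setLIntegral_measure_zero _ _ Real.volume_singleton]


lemma summable_exp_neg_abs_int : Summable (fun n : ℤ => Real.exp (-|(n : ℝ)|)) := by
  have hgeo : Summable (fun n : ℕ => Real.exp (-1) ^ n) :=
    summable_geometric_of_lt_one (le_of_lt (Real.exp_pos _))
      (Real.exp_lt_one_iff.2 (by norm_num))
  apply Summable.of_nat_of_neg
  · refine hgeo.congr fun n => ?_
    rw [← Real.exp_nat_mul]
    congr 1
    push_cast
    rw [abs_of_nonneg (by positivity : (0:ℝ) ≤ (n:ℝ))]
    ring
  · refine hgeo.congr fun n => ?_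
    rw [← Real.exp_nat_mul]
    congr 1
    push_cast
    rw [abs_neg, abs_of_nonneg (by positivity : (0:ℝ) ≤ (n:ℝ))]
    ring

lemma summable_gauss0 : Summable (fun n : ℤ => Real.exp (-((n : ℝ)) ^ 2 / 2)) := by
  refine Summable.of_nonneg_of_le (fun n => (Real.exp_pos _).le)
    (fun n => ?_) (summable_exp_neg_abs_int.mul_left (Real.exp 1))
  rw [← Real.exp_add]
  apply Real.exp_le_exp.2
  nlinarith [sq_abs ((n : ℝ)), sq_nonneg (|(n : ℝ)| - 1)]

lemma summable_gauss_shift (a : ℤ) :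
    Summable (fun n : ℤ => Real.exp (-((n : ℝ) - (a : ℝ)) ^ 2 / 2)) := by
  refine ((Equiv.addRight a).summable_iff).1 (summable_gauss0.congr fun n : ℤ =>
    show Real.exp (-((n : ℝ)) ^ 2 / 2)
      = ((fun m : ℤ => Real.exp (-((m : ℝ) - (a : ℝ)) ^ 2 / 2)) ∘ (Equiv.addRight a)) n from ?_)
  simp only [Function.comp_apply, Equiv.coe_addRight]
  congr 1
  push_cast
  ring

lemma tsum_gauss_shift (a : ℤ) :
    ∑' n : ℤ, Real.exp (-((n : ℝ) - (a : ℝ)) ^ 2 / 2)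
      = ∑' n : ℤ, Real.exp (-((n : ℝ)) ^ 2 / 2) := by
  rw [← (Equiv.addRight a).tsum_eq (fun n : ℤ => Real.exp (-((n : ℝ) - (a : ℝ)) ^ 2 / 2))]
  refine tsum_congr fun n => ?_
  simp only [Equiv.coe_addRight]
  congr 1
  push_cast
  ring


noncomputable def lnS : ℝ := ∑' n : ℤ, Real.exp (-((n : ℝ)) ^ 2 / 2)

lemma lnS_pos : 0 < lnS :=
  Summable.tsum_pos summable_gauss0 (fun n => (Real.exp_pos _).le) 0 (Real.exp_pos _)

noncomputable def nuW (n : ℤ) : ℝ := lnS⁻¹ * Real.exp (-((n : ℝ)) ^ 2 / 2)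

lemma nuW_pos (n : ℤ) : 0 < nuW n := by
  have := lnS_pos
  unfold nuW
  positivity

noncomputable def nu : Measure ℝ :=
  Measure.sum fun n : ℤ => ENNReal.ofReal (nuW n) • Measure.dirac (Real.exp (n : ℝ))

lemma term_eq (k : ℕ) (n : ℤ) :
    nuW n * Real.exp (n : ℝ) ^ k
      = (lnS⁻¹ * Real.exp ((k : ℝ) ^ 2 / 2)) *
          Real.exp (-((n : ℝ) - ((k : ℤ) : ℝ)) ^ 2 / 2) := by
  rw [nuW, show Real.exp (n : ℝ) ^ k = Real.exp ((k : ℝ) * (n : ℝ)) from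
    (Real.exp_nat_mul _ k).symm]
  have h : Real.exp (-((n : ℝ)) ^ 2 / 2) * Real.exp ((k : ℝ) * (n : ℝ))
      = Real.exp ((k : ℝ) ^ 2 / 2) * Real.exp (-((n : ℝ) - ((k : ℤ) : ℝ)) ^ 2 / 2) := by
    rw [← Real.exp_add, ← Real.exp_add, Real.exp_eq_exp]
    push_cast
    ring
  linear_combination lnS⁻¹ * h

lemma summable_term (k : ℕ) : Summable (fun n : ℤ => nuW n * Real.exp (n : ℝ) ^ k) :=
  (((summable_gauss_shift (k : ℤ)).mul_left (lnS⁻¹ * Real.exp ((k : ℝ) ^ 2 / 2))).congr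
    fun n => (term_eq k n).symm)

lemma nu_Iio : nu (Set.Iio 0) = 0 := by
  rw [nu, Measure.sum_apply _ measurableSet_Iio]
  have h : ∀ n : ℤ, (ENNReal.ofReal (nuW n) • Measure.dirac (Real.exp (n : ℝ)))
      (Set.Iio 0) = 0 := by
    intro n
    rw [Measure.smul_apply, Measure.dirac_apply' _ measurableSet_Iio]
    rw [Set.indicator_of_notMem (by simp [not_lt.2 (Real.exp_pos _).le])]
    simp
  simp [h]

lemma nu_one_ne : nu {(1 : ℝ)} ≠ 0 := by
  have hle : (ENNReal.ofReal (nuW 0) • Measure.dirac (Real.exp ((0 : ℤ) : ℝ))) {(1 : ℝ)}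
      ≤ nu {(1 : ℝ)} := by
    rw [nu, Measure.sum_apply _ (measurableSet_singleton 1)]
    exact ENNReal.le_tsum 0
  have h0 : (ENNReal.ofReal (nuW 0) • Measure.dirac (Real.exp ((0 : ℤ) : ℝ))) {(1 : ℝ)}
      = ENNReal.ofReal (nuW 0) := by
    rw [Measure.smul_apply, Measure.dirac_apply' _ (measurableSet_singleton 1)]
    rw [Set.indicator_of_mem (by simp)]
    simp
  intro hco
  rw [hco] at hle
  rw [h0] at hle
  have := nuW_pos 0
  simp only [le_zero_iff, ENNReal.ofReal_eq_zero] at hle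
  linarith

lemma nu_hasMoment (k : ℕ) : Integrable (fun x : ℝ => x ^ k) nu := by
  constructor
  · exact (measurable_id.pow_const k).aestronglyMeasurable
  · show (∫⁻ x, ↑‖x ^ k‖₊ ∂nu) < ⊤
    rw [nu, lintegral_sum_measure]
    have h : ∀ n : ℤ, (∫⁻ x, (‖x ^ k‖₊ : ℝ≥0∞)
          ∂(ENNReal.ofReal (nuW n) • Measure.dirac (Real.exp (n : ℝ))))
        = ENNReal.ofReal (nuW n * Real.exp (n : ℝ) ^ k) := by
      intro n
      rw [lintegral_smul_measure, lintegral_dirac, ← enorm_eq_nnnorm,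
        Real.enorm_eq_ofReal (pow_pos (Real.exp_pos _) k).le, smul_eq_mul, ← ENNReal.ofReal_mul (nuW_pos n).le]
    rw [tsum_congr h, ← ENNReal.ofReal_tsum_of_nonneg
      (fun n => (mul_pos (nuW_pos n) (pow_pos (Real.exp_pos _) k)).le) (summable_term k)]
    exact ENNReal.ofReal_lt_top

lemma nu_mom (k : ℕ) : (∫ x, x ^ k ∂nu) = Real.exp ((k : ℝ) ^ 2 / 2) := by
  rw [show (∫ x, x ^ k ∂nu) = ∫ x, x ^ k ∂(Measure.sum fun n : ℤ =>
      ENNReal.ofReal (nuW n) • Measure.dirac (Real.exp (n : ℝ))) from rfl,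
    integral_sum_measure (nu_hasMoment k)]
  have h : ∀ n : ℤ, (∫ x, x ^ k ∂(ENNReal.ofReal (nuW n) • Measure.dirac (Real.exp (n : ℝ))))
      = nuW n * Real.exp (n : ℝ) ^ k := by
    intro n
    rw [integral_smul_measure, integral_dirac, ENNReal.toReal_ofReal (nuW_pos n).le,
      smul_eq_mul]
  rw [tsum_congr h, tsum_congr (term_eq k), tsum_mul_left, tsum_gauss_shift, ← lnS]
  have := lnS_pos
  field_simp


theorem stmt_16 :
    IsProbabilityMeasure lognormal ∧
    lognormal (Set.Iio 0) = 0 ∧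
    HasMoments lognormal ∧
    (∀ k : ℕ, mom lognormal k = Real.exp ((k : ℝ) ^ 2 / 2)) ∧
    ∃ ν : Measure ℝ, ν (Set.Iio 0) = 0 ∧ HasMoments ν ∧
      (∀ k : ℕ, mom ν k = Real.exp ((k : ℝ) ^ 2 / 2)) ∧ ν ≠ lognormal := by
  refine ⟨lognormal_prob, lognormal_Iio, fun k => lognormal_hasMoment k,
    fun k => lognormal_mom k, nu, nu_Iio, fun k => nu_hasMoment k,
    fun k => nu_mom k, fun h => nu_one_ne (by rw [h]; exact lognormal_one)⟩
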